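/- Let H be a Hopf algebra whose antipode S has finite order, and suppose every element of H lies in a finite-dimensional subcoalgebra of H. Then H is locally affine: every finite subset of H is contained in an affine Hopf subalgebra. -/

import Mathlib

open scoped TensorProduct
open Coalgebra TensorProduct

set_option linter.unusedSectionVars false

namespace HopfAux

variable {k : Type*} [CommSemiring k]



section ConvGeneral

variable {C : Type*} [AddCommMonoid C] [Module k C] [CoalgebraStruct k C]
variable {A : Type*} [Semiring A] [Algebra k A]

/-- Convolution product on `Hom(C, A)`. -/
noncomputable def conv (f g : C →ₗ[k] A) : C →ₗ[k] A :=
  LinearMap.mul' k A ∘ₗ TensorProduct.map f g ∘ₗ Coalgebra.comul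

/-- Convolution unit. -/
noncomputable def cunit : C →ₗ[k] A :=
  Algebra.linearMap k A ∘ₗ Coalgebra.counit

lemma cunit_apply (a : C) :
    (cunit (k := k) (C := C) (A := A)) a = algebraMap k A (Coalgebra.counit (R := k) a) := rfl

lemma conv_repr {ι : Type*} (f g : C →ₗ[k] A) {a : C} (r : Coalgebra.Repr k a ι) :
    conv f g a = ∑ i ∈ r.index, f (r.left i) * g (r.right i) := by
  simp only [conv, LinearMap.comp_apply, ← r.eq, map_sum, TensorProduct.map_tmul,
    LinearMap.mul'_apply]

section laws

variable (hco : TensorProduct.assoc k C C C ∘ₗ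
    (Coalgebra.comul (R := k) (A := C)).rTensor C ∘ₗ Coalgebra.comul
      = (Coalgebra.comul (R := k) (A := C)).lTensor C ∘ₗ Coalgebra.comul)
variable (hrc : (Coalgebra.counit (R := k) (A := C)).rTensor C ∘ₗ Coalgebra.comul
      = TensorProduct.mk k k C 1)
variable (hlc : (Coalgebra.counit (R := k) (A := C)).lTensor C ∘ₗ Coalgebra.comul
      = (TensorProduct.mk k C k).flip 1)

include hlc in
lemma sum_counit_smul_right {ι : Type*} {a : C} (r : Coalgebra.Repr k a ι) :
    ∑ i ∈ r.index, Coalgebra.counit (R := k) (r.right i) • r.left i = a := by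
  have h := congrArg (TensorProduct.rid k C) congr($hlc a)
  simpa [← r.eq, map_sum] using h

include hrc in
lemma sum_counit_smul_left {ι : Type*} {a : C} (r : Coalgebra.Repr k a ι) :
    ∑ i ∈ r.index, Coalgebra.counit (R := k) (r.left i) • r.right i = a := by
  have h := congrArg (TensorProduct.lid k C) congr($hrc a)
  simpa [← r.eq, map_sum] using h

include hco in
lemma repr_coassoc {ι κ Λ : Type*} {a : C} (r : Coalgebra.Repr k a ι)
    (s : (i : ι) → Coalgebra.Repr k (r.left i) κ)
    (u : (i : ι) → Coalgebra.Repr k (r.right i) Λ) :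
    ∑ i ∈ r.index, ∑ j ∈ (s i).index,
      (s i).left j ⊗ₜ[k] ((s i).right j ⊗ₜ[k] r.right i)
    = ∑ i ∈ r.index, ∑ j ∈ (u i).index,
      r.left i ⊗ₜ[k] ((u i).left j ⊗ₜ[k] (u i).right j) := by
  simpa [(u _).eq, ← (s _).eq, ← TensorProduct.tmul_sum,
    TensorProduct.sum_tmul, ← r.eq, map_sum] using congr($hco a)

include hlc in
lemma conv_cunit (f : C →ₗ[k] A) : conv f cunit = f := by
  ext a
  rw [conv_repr f cunit (ℛ k a)]
  calc ∑ i ∈ (ℛ k a).index, f ((ℛ k a).left i) * cunit ((ℛ k a).right i)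
      = ∑ i ∈ (ℛ k a).index,
          f (Coalgebra.counit (R := k) ((ℛ k a).right i) • (ℛ k a).left i) := by
        refine Finset.sum_congr rfl fun i _ => ?_
        rw [cunit_apply, ← Algebra.commutes, ← Algebra.smul_def, map_smul]
    _ = f a := by rw [← map_sum, sum_counit_smul_right hlc]

include hrc in
lemma cunit_conv (f : C →ₗ[k] A) : conv cunit f = f := by
  ext a
  rw [conv_repr cunit f (ℛ k a)]
  calc ∑ i ∈ (ℛ k a).index, cunit ((ℛ k a).left i) * f ((ℛ k a).right i)
      = ∑ i ∈ (ℛ k a).index,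
          f (Coalgebra.counit (R := k) ((ℛ k a).left i) • (ℛ k a).right i) := by
        refine Finset.sum_congr rfl fun i _ => ?_
        rw [cunit_apply, ← Algebra.smul_def, map_smul]
    _ = f a := by rw [← map_sum, sum_counit_smul_left hrc]

include hco in
lemma conv_assoc (f g h : C →ₗ[k] A) : conv (conv f g) h = conv f (conv g h) := by
  ext a
  have key := congrArg
      (TensorProduct.map f (TensorProduct.map g h))
      (repr_coassoc hco (ℛ k a) (fun i => ℛ k ((ℛ k a).left i))
        (fun i => ℛ k ((ℛ k a).right i)))
  have key2 := congrArg (LinearMap.mul' k A ∘ₗ (LinearMap.mul' k A).lTensor A) key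
  simp only [map_sum, TensorProduct.map_tmul, LinearMap.comp_apply,
    LinearMap.lTensor_tmul, LinearMap.mul'_apply] at key2
  rw [conv_repr (conv f g) h (ℛ k a), conv_repr f (conv g h) (ℛ k a)]
  calc ∑ i ∈ (ℛ k a).index, conv f g ((ℛ k a).left i) * h ((ℛ k a).right i)
      = ∑ i ∈ (ℛ k a).index, ∑ j ∈ (ℛ k ((ℛ k a).left i)).index,
          f ((ℛ k ((ℛ k a).left i)).left j) *
            (g ((ℛ k ((ℛ k a).left i)).right j) * h ((ℛ k a).right i)) := by
        refine Finset.sum_congr rfl fun i _ => ?_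
        rw [conv_repr f g (ℛ k ((ℛ k a).left i)), Finset.sum_mul]
        simp [mul_assoc]
    _ = ∑ i ∈ (ℛ k a).index, ∑ j ∈ (ℛ k ((ℛ k a).right i)).index,
          f ((ℛ k a).left i) *
            (g ((ℛ k ((ℛ k a).right i)).left j) * h ((ℛ k ((ℛ k a).right i)).right j)) :=
        key2
    _ = ∑ i ∈ (ℛ k a).index, f ((ℛ k a).left i) * conv g h ((ℛ k a).right i) := by
        refine Finset.sum_congr rfl fun i _ => ?_
        rw [conv_repr g h (ℛ k ((ℛ k a).right i)), Finset.mul_sum]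

include hco hrc hlc in
lemma conv_unique {f g h : C →ₗ[k] A} (h1 : conv f g = cunit) (h2 : conv h f = cunit) :
    g = h := by
  have e : conv h (conv f g) = conv (conv h f) g := (conv_assoc hco h f g).symm
  rw [h1, h2, conv_cunit hlc, cunit_conv hrc] at e
  exact e.symm ▸ rfl

end laws

end ConvGeneral


section TensorCoalg

variable {A : Type*} {B : Type*} [AddCommMonoid A] [AddCommMonoid B]
  [Module k A] [Module k B] [Coalgebra k A] [Coalgebra k B]

lemma tcounit_tmul (a : A) (b : B) :
    Coalgebra.counit (R := k) (a ⊗ₜ[k] b)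
      = Coalgebra.counit (R := k) a * Coalgebra.counit (R := k) b := by
  simp [mul_comm]

lemma tcomul_tmul {ι κ : Type*} {a : A} {b : B} (ra : Coalgebra.Repr k a ι)
    (rb : Coalgebra.Repr k b κ) :
    Coalgebra.comul (R := k) (a ⊗ₜ[k] b)
      = ∑ i ∈ ra.index, ∑ j ∈ rb.index,
          (ra.left i ⊗ₜ[k] rb.left j) ⊗ₜ[k] (ra.right i ⊗ₜ[k] rb.right j) := by
  simp only [TensorProduct.comul_tmul, ← ra.eq, ← rb.eq]
  rw [TensorProduct.sum_tmul, map_sum]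
  refine Finset.sum_congr rfl fun i _ => ?_
  rw [TensorProduct.tmul_sum, map_sum]
  refine Finset.sum_congr rfl fun j _ => ?_
  exact TensorProduct.AlgebraTensorModule.tensorTensorTensorComm_tmul ..

/-- A `Repr` for a pure tensor, built from `Repr`s of the factors. -/
noncomputable def tmulRepr {ι κ : Type*} {a : A} {b : B} (ra : Coalgebra.Repr k a ι)
    (rb : Coalgebra.Repr k b κ) :
    Coalgebra.Repr k (a ⊗ₜ[k] b) (ι × κ) where
  index := ra.index ×ˢ rb.index
  left := fun p => ra.left p.1 ⊗ₜ[k] rb.left p.2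
  right := fun p => ra.right p.1 ⊗ₜ[k] rb.right p.2
  eq := by rw [Finset.sum_product]; exact (tcomul_tmul ra rb).symm

lemma scalar_tmul_smul (c d : k) (x : A) (y : B) :
    (c * d) ⊗ₜ[k] (x ⊗ₜ[k] y) = (1 : k) ⊗ₜ[k] ((c • x) ⊗ₜ[k] (d • y)) := by
  rw [show (c*d) = (c*d) • (1:k) by simp, TensorProduct.smul_tmul, mul_smul]
  congr 1
  rw [← TensorProduct.tmul_smul, TensorProduct.smul_tmul']

lemma scalar_tmul_smul' (c d : k) (x : A) (y : B) :
    (x ⊗ₜ[k] y) ⊗ₜ[k] (c * d) = ((c • x) ⊗ₜ[k] (d • y)) ⊗ₜ[k] (1 : k) := by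
  have h1 : ((c • x) ⊗ₜ[k] (d • y)) = (c*d) • (x ⊗ₜ[k] y) := by
    simp only [TensorProduct.tmul_smul, TensorProduct.smul_tmul', smul_smul, mul_comm d c]
  have h2 : ((c*d) • (x ⊗ₜ[k] y)) ⊗ₜ[k] (1:k) = (x ⊗ₜ[k] y) ⊗ₜ[k] ((c*d) • (1:k)) :=
    TensorProduct.smul_tmul _ _ _
  rw [h1, h2, smul_eq_mul, mul_one]

lemma trc :
    (Coalgebra.counit (R := k) (A := A ⊗[k] B)).rTensor (A ⊗[k] B) ∘ₗ Coalgebra.comul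
      = TensorProduct.mk k k (A ⊗[k] B) 1 := by
  apply TensorProduct.ext'
  intro a b
  have ra := ℛ k a; have rb := ℛ k b
  simp only [LinearMap.comp_apply, tcomul_tmul ra rb, map_sum, LinearMap.rTensor_tmul,
    tcounit_tmul, TensorProduct.mk_apply, scalar_tmul_smul, ← TensorProduct.tmul_sum,
    ← TensorProduct.sum_tmul]
  rw [sum_counit_smul_left Coalgebra.rTensor_counit_comp_comul ra,
    sum_counit_smul_left Coalgebra.rTensor_counit_comp_comul rb]

lemma tlc :
    (Coalgebra.counit (R := k) (A := A ⊗[k] B)).lTensor (A ⊗[k] B) ∘ₗ Coalgebra.comul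
      = (TensorProduct.mk k (A ⊗[k] B) k).flip 1 := by
  apply TensorProduct.ext'
  intro a b
  have ra := ℛ k a; have rb := ℛ k b
  simp only [LinearMap.comp_apply, tcomul_tmul ra rb, map_sum, LinearMap.lTensor_tmul,
    tcounit_tmul, LinearMap.flip_apply, TensorProduct.mk_apply, scalar_tmul_smul',
    ← TensorProduct.tmul_sum, ← TensorProduct.sum_tmul]
  rw [sum_counit_smul_right Coalgebra.lTensor_counit_comp_comul ra,
    sum_counit_smul_right Coalgebra.lTensor_counit_comp_comul rb]

lemma tco :
    TensorProduct.assoc k (A ⊗[k] B) (A ⊗[k] B) (A ⊗[k] B) ∘ₗ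
        (Coalgebra.comul (R := k) (A := A ⊗[k] B)).rTensor (A ⊗[k] B) ∘ₗ Coalgebra.comul
      = (Coalgebra.comul (R := k) (A := A ⊗[k] B)).lTensor (A ⊗[k] B) ∘ₗ
          Coalgebra.comul := by
  apply TensorProduct.ext'
  intro a b
  have ra := ℛ k a; have rb := ℛ k b
  have sa : (i : ra.ι) → Coalgebra.Repr k (ra.left i) (A × A) := fun i => ℛ k (ra.left i)
  have ua : (i : ra.ι) → Coalgebra.Repr k (ra.right i) (A × A) := fun i => ℛ k (ra.right i)
  have sb : (j : rb.ι) → Coalgebra.Repr k (rb.left j) (B × B) := fun j => ℛ k (rb.left j)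
  have ub : (j : rb.ι) → Coalgebra.Repr k (rb.right j) (B × B) := fun j => ℛ k (rb.right j)
  have hL : (TensorProduct.assoc k (A ⊗[k] B) (A ⊗[k] B) (A ⊗[k] B))
      ((Coalgebra.comul (R := k)).rTensor (A ⊗[k] B)
        (Coalgebra.comul (R := k) (a ⊗ₜ[k] b)))
      = ∑ i ∈ ra.index, ∑ j ∈ rb.index, ∑ p ∈ (sa i).index, ∑ q ∈ (sb j).index,
          ((sa i).left p ⊗ₜ[k] (sb j).left q) ⊗ₜ[k]
            (((sa i).right p ⊗ₜ[k] (sb j).right q) ⊗ₜ[k]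
              (ra.right i ⊗ₜ[k] rb.right j)) := by
    rw [tcomul_tmul ra rb]
    simp only [map_sum, LinearMap.rTensor_tmul]
    refine Finset.sum_congr rfl fun i _ => Finset.sum_congr rfl fun j _ => ?_
    rw [tcomul_tmul (sa i) (sb j)]
    simp only [TensorProduct.sum_tmul, map_sum, TensorProduct.assoc_tmul]
  have hR : (Coalgebra.comul (R := k)).lTensor (A ⊗[k] B)
      (Coalgebra.comul (R := k) (a ⊗ₜ[k] b))
      = ∑ i ∈ ra.index, ∑ j ∈ rb.index, ∑ p ∈ (ua i).index, ∑ q ∈ (ub j).index,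
          (ra.left i ⊗ₜ[k] rb.left j) ⊗ₜ[k]
            (((ua i).left p ⊗ₜ[k] (ub j).left q) ⊗ₜ[k]
              ((ua i).right p ⊗ₜ[k] (ub j).right q)) := by
    rw [tcomul_tmul ra rb]
    simp only [map_sum, LinearMap.lTensor_tmul]
    refine Finset.sum_congr rfl fun i _ => Finset.sum_congr rfl fun j _ => ?_
    rw [tcomul_tmul (ua i) (ub j)]
    simp only [TensorProduct.tmul_sum]
  simp only [LinearMap.comp_apply, LinearEquiv.coe_coe]
  rw [hL, hR]
  -- b-switch, mapped into the big space
  have e2 : ∀ x y z : A,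
      ∑ j ∈ rb.index, ∑ q ∈ (sb j).index,
        (x ⊗ₜ[k] (sb j).left q) ⊗ₜ[k]
          ((y ⊗ₜ[k] (sb j).right q) ⊗ₜ[k] (z ⊗ₜ[k] rb.right j))
      = ∑ j ∈ rb.index, ∑ q ∈ (ub j).index,
        (x ⊗ₜ[k] rb.left j) ⊗ₜ[k]
          ((y ⊗ₜ[k] (ub j).left q) ⊗ₜ[k] (z ⊗ₜ[k] (ub j).right q)) := by
    intro x y z
    have := congrArg
      (TensorProduct.map (TensorProduct.mk k A B x)
        (TensorProduct.map (TensorProduct.mk k A B y) (TensorProduct.mk k A B z)))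
      (repr_coassoc Coalgebra.coassoc rb sb ub)
    simpa only [map_sum, TensorProduct.map_tmul, TensorProduct.mk_apply] using this
  -- a-switch, mapped into the big space
  have e1 : ∀ x y z : B,
      ∑ i ∈ ra.index, ∑ p ∈ (sa i).index,
        ((sa i).left p ⊗ₜ[k] x) ⊗ₜ[k]
          (((sa i).right p ⊗ₜ[k] y) ⊗ₜ[k] (ra.right i ⊗ₜ[k] z))
      = ∑ i ∈ ra.index, ∑ p ∈ (ua i).index,
        (ra.left i ⊗ₜ[k] x) ⊗ₜ[k]
          (((ua i).left p ⊗ₜ[k] y) ⊗ₜ[k] ((ua i).right p ⊗ₜ[k] z)) := by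
    intro x y z
    have := congrArg
      (TensorProduct.map ((TensorProduct.mk k A B).flip x)
        (TensorProduct.map ((TensorProduct.mk k A B).flip y) ((TensorProduct.mk k A B).flip z)))
      (repr_coassoc Coalgebra.coassoc ra sa ua)
    simpa only [map_sum, TensorProduct.map_tmul, TensorProduct.mk_apply,
      LinearMap.flip_apply] using this
  calc
    ∑ i ∈ ra.index, ∑ j ∈ rb.index, ∑ p ∈ (sa i).index, ∑ q ∈ (sb j).index,
        ((sa i).left p ⊗ₜ[k] (sb j).left q) ⊗ₜ[k]
          (((sa i).right p ⊗ₜ[k] (sb j).right q) ⊗ₜ[k] (ra.right i ⊗ₜ[k] rb.right j))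
      = ∑ i ∈ ra.index, ∑ p ∈ (sa i).index, ∑ j ∈ rb.index, ∑ q ∈ (sb j).index,
        ((sa i).left p ⊗ₜ[k] (sb j).left q) ⊗ₜ[k]
          (((sa i).right p ⊗ₜ[k] (sb j).right q) ⊗ₜ[k] (ra.right i ⊗ₜ[k] rb.right j)) :=
        Finset.sum_congr rfl fun i _ => Finset.sum_comm
    _ = ∑ i ∈ ra.index, ∑ p ∈ (sa i).index, ∑ j ∈ rb.index, ∑ q ∈ (ub j).index,
        ((sa i).left p ⊗ₜ[k] rb.left j) ⊗ₜ[k]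
          (((sa i).right p ⊗ₜ[k] (ub j).left q) ⊗ₜ[k] (ra.right i ⊗ₜ[k] (ub j).right q)) :=
        Finset.sum_congr rfl fun i _ => Finset.sum_congr rfl fun p _ =>
          e2 ((sa i).left p) ((sa i).right p) (ra.right i)
    _ = ∑ j ∈ rb.index, ∑ q ∈ (ub j).index, ∑ i ∈ ra.index, ∑ p ∈ (sa i).index,
        ((sa i).left p ⊗ₜ[k] rb.left j) ⊗ₜ[k]
          (((sa i).right p ⊗ₜ[k] (ub j).left q) ⊗ₜ[k] (ra.right i ⊗ₜ[k] (ub j).right q)) := by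
        refine (Finset.sum_congr rfl fun i _ => Finset.sum_comm).trans ?_
        refine (Finset.sum_comm).trans ?_
        refine (Finset.sum_congr rfl fun j _ => Finset.sum_congr rfl fun i _ =>
          Finset.sum_comm).trans ?_
        exact Finset.sum_congr rfl fun j _ => Finset.sum_comm
    _ = ∑ j ∈ rb.index, ∑ q ∈ (ub j).index, ∑ i ∈ ra.index, ∑ p ∈ (ua i).index,
        (ra.left i ⊗ₜ[k] rb.left j) ⊗ₜ[k]
          (((ua i).left p ⊗ₜ[k] (ub j).left q) ⊗ₜ[k] ((ua i).right p ⊗ₜ[k] (ub j).right q)) :=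
        Finset.sum_congr rfl fun j _ => Finset.sum_congr rfl fun q _ =>
          e1 (rb.left j) ((ub j).left q) ((ub j).right q)
    _ = ∑ i ∈ ra.index, ∑ j ∈ rb.index, ∑ p ∈ (ua i).index, ∑ q ∈ (ub j).index,
        (ra.left i ⊗ₜ[k] rb.left j) ⊗ₜ[k]
          (((ua i).left p ⊗ₜ[k] (ub j).left q) ⊗ₜ[k] ((ua i).right p ⊗ₜ[k] (ub j).right q)) := by
        refine (Finset.sum_congr rfl fun j _ => Finset.sum_comm).trans ?_
        refine (Finset.sum_congr rfl fun j _ => Finset.sum_congr rfl fun i _ =>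
          Finset.sum_comm).trans ?_
        exact Finset.sum_comm

end TensorCoalg


section Hopf

variable {H : Type*} [Semiring H] [HopfAlgebra k H]

lemma conv_antipode_id :
    conv (HopfAlgebra.antipode (R := k) (A := H)) LinearMap.id = cunit :=
  HopfAlgebra.mul_antipode_rTensor_comul

lemma conv_id_antipode :
    conv LinearMap.id (HopfAlgebra.antipode (R := k) (A := H)) = cunit :=
  HopfAlgebra.mul_antipode_lTensor_comul

lemma antipode_one : HopfAlgebra.antipode (R := k) (1 : H) = 1 := by
  have h := HopfAlgebra.mul_antipode_rTensor_comul_apply (R := k) (a := (1 : H))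
  simpa [Algebra.TensorProduct.one_def] using h

/-- A representation of `comul (a * b)` from representations of the factors. -/
noncomputable def mulRepr {ι κ : Type*} {a b : H} (ra : Coalgebra.Repr k a ι)
    (rb : Coalgebra.Repr k b κ) :
    Coalgebra.Repr k (a * b) (ι × κ) where
  index := ra.index ×ˢ rb.index
  left := fun p => ra.left p.1 * rb.left p.2
  right := fun p => ra.right p.1 * rb.right p.2
  eq := by
    rw [Finset.sum_product, Bialgebra.comul_mul, ← ra.eq, ← rb.eq, Finset.sum_mul_sum]
    simp only [Algebra.TensorProduct.tmul_mul_tmul]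

lemma antipode_mul (a b : H) :
    HopfAlgebra.antipode (R := k) (a * b)
      = HopfAlgebra.antipode (R := k) b * HopfAlgebra.antipode (R := k) (a : H) := by
  set S : H →ₗ[k] H := HopfAlgebra.antipode (R := k) (A := H) with hSdef
  set M : H ⊗[k] H →ₗ[k] H := LinearMap.mul' k H with hM
  set N : H ⊗[k] H →ₗ[k] H := S ∘ₗ M with hN
  set P : H ⊗[k] H →ₗ[k] H :=
    M ∘ₗ TensorProduct.map S S ∘ₗ (TensorProduct.comm k H H).toLinearMap with hP
  have h1 : conv N M = (cunit : H ⊗[k] H →ₗ[k] H) := by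
    apply TensorProduct.ext'
    intro x y
    rw [conv_repr N M (tmulRepr (ℛ k x) (ℛ k y))]
    have e : ∑ i ∈ (tmulRepr (ℛ k x) (ℛ k y)).index,
        N ((tmulRepr (ℛ k x) (ℛ k y)).left i) * M ((tmulRepr (ℛ k x) (ℛ k y)).right i)
          = ∑ i ∈ (mulRepr (ℛ k x) (ℛ k y)).index,
              HopfAlgebra.antipode (R := k) ((mulRepr (ℛ k x) (ℛ k y)).left i) *
                (mulRepr (ℛ k x) (ℛ k y)).right i := by
      refine Finset.sum_congr rfl fun p _ => ?_
      simp only [hN, hM, hSdef, LinearMap.comp_apply, tmulRepr, mulRepr,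
        LinearMap.mul'_apply]
    rw [e, HopfAlgebra.sum_antipode_mul_eq_algebraMap_counit (mulRepr (ℛ k x) (ℛ k y))]
    rw [cunit_apply, tcounit_tmul, Bialgebra.counit_mul]
  have h2 : conv M P = (cunit : H ⊗[k] H →ₗ[k] H) := by
    apply TensorProduct.ext'
    intro x y
    rw [conv_repr M P (tmulRepr (ℛ k x) (ℛ k y)),
      show (tmulRepr (ℛ k x) (ℛ k y)).index = (ℛ k x).index ×ˢ (ℛ k y).index from rfl]
    refine (Finset.sum_product _ _ _).trans ?_
    have : ∀ i ∈ (ℛ k x).index, ∀ j ∈ (ℛ k y).index,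
        M ((tmulRepr (ℛ k x) (ℛ k y)).left (i, j)) *
          P ((tmulRepr (ℛ k x) (ℛ k y)).right (i, j))
        = (ℛ k x).left i *
            (((ℛ k y).left j * S ((ℛ k y).right j)) * S ((ℛ k x).right i)) := by
      intro i _ j _
      simp only [hM, hP, tmulRepr, LinearMap.comp_apply, LinearEquiv.coe_coe,
        TensorProduct.comm_tmul, TensorProduct.map_tmul, LinearMap.mul'_apply]
      rw [mul_assoc, mul_assoc]
    calc
      ∑ i ∈ (ℛ k x).index, ∑ j ∈ (ℛ k y).index,
          M ((tmulRepr (ℛ k x) (ℛ k y)).left (i, j)) *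
            P ((tmulRepr (ℛ k x) (ℛ k y)).right (i, j))
        = ∑ i ∈ (ℛ k x).index, ∑ j ∈ (ℛ k y).index,
            (ℛ k x).left i *
              (((ℛ k y).left j * S ((ℛ k y).right j)) * S ((ℛ k x).right i)) :=
          Finset.sum_congr rfl fun i hi => Finset.sum_congr rfl fun j hj => this i hi j hj
      _ = ∑ i ∈ (ℛ k x).index,
            (ℛ k x).left i *
              ((∑ j ∈ (ℛ k y).index, (ℛ k y).left j * S ((ℛ k y).right j)) *
                S ((ℛ k x).right i)) := by
          refine Finset.sum_congr rfl fun i _ => ?_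
          rw [Finset.sum_mul, Finset.mul_sum]
      _ = cunit (x ⊗ₜ[k] y) := by
          rw [HopfAlgebra.sum_mul_antipode_eq_algebraMap_counit (ℛ k y)]
          rw [cunit_apply, tcounit_tmul]
          calc
            ∑ i ∈ (ℛ k x).index,
                (ℛ k x).left i *
                  (algebraMap k H (Coalgebra.counit (R := k) y) * S ((ℛ k x).right i))
              = Coalgebra.counit (R := k) y •
                  ∑ i ∈ (ℛ k x).index, (ℛ k x).left i * S ((ℛ k x).right i) := by
                rw [Finset.smul_sum]
                refine Finset.sum_congr rfl fun i _ => ?_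
                rw [← Algebra.smul_def, mul_smul_comm]
            _ = algebraMap k H
                  (Coalgebra.counit (R := k) x * Coalgebra.counit (R := k) y) := by
                rw [HopfAlgebra.sum_mul_antipode_eq_algebraMap_counit (ℛ k x), Algebra.smul_def,
                  ← map_mul, mul_comm]
  have h3 : P = N := conv_unique tco trc tlc h2 h1
  have h4 := congr($h3 (a ⊗ₜ[k] b))
  simpa only [hP, hN, hM, LinearMap.comp_apply, LinearEquiv.coe_coe,
    TensorProduct.comm_tmul, TensorProduct.map_tmul, LinearMap.mul'_apply] using h4.symm

lemma antipode_algebraMap (c : k) :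
    HopfAlgebra.antipode (R := k) (algebraMap k H c) = algebraMap k H c := by
  rw [Algebra.algebraMap_eq_smul_one, map_smul, antipode_one]

lemma comul_antipode (x : H) :
    Coalgebra.comul (R := k) (HopfAlgebra.antipode (R := k) x)
      = TensorProduct.map (HopfAlgebra.antipode (R := k)) (HopfAlgebra.antipode (R := k))
          (TensorProduct.comm k H H (Coalgebra.comul (R := k) x)) := by
  set D : H →ₗ[k] H ⊗[k] H := Coalgebra.comul with hD
  set P' : H ⊗[k] H →ₗ[k] H ⊗[k] H :=
    TensorProduct.map (HopfAlgebra.antipode (R := k)) (HopfAlgebra.antipode (R := k)) ∘ₗ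
      (TensorProduct.comm k H H).toLinearMap with hP'
  set N : H →ₗ[k] H ⊗[k] H := D ∘ₗ HopfAlgebra.antipode (R := k) with hN
  set P : H →ₗ[k] H ⊗[k] H := P' ∘ₗ D with hP
  have h1 : conv N D = (cunit : H →ₗ[k] H ⊗[k] H) := by
    ext a
    rw [conv_repr N D (ℛ k a)]
    calc
      ∑ i ∈ (ℛ k a).index, N ((ℛ k a).left i) * D ((ℛ k a).right i)
        = ∑ i ∈ (ℛ k a).index,
            Coalgebra.comul (R := k)
              (HopfAlgebra.antipode (R := k) ((ℛ k a).left i) * (ℛ k a).right i) := by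
          refine Finset.sum_congr rfl fun i _ => ?_
          rw [hN, hD, LinearMap.comp_apply, Bialgebra.comul_mul]
      _ = Coalgebra.comul (R := k)
            (∑ i ∈ (ℛ k a).index,
              HopfAlgebra.antipode (R := k) ((ℛ k a).left i) * (ℛ k a).right i) := by
          rw [map_sum]
      _ = cunit a := by
          rw [HopfAlgebra.sum_antipode_mul_eq_algebraMap_counit (ℛ k a), Bialgebra.comul_algebraMap,
            cunit_apply]
  have h2 : conv D P = (cunit : H →ₗ[k] H ⊗[k] H) := by
    ext a
    set r : Coalgebra.Repr k a (H × H) := ℛ k a with hr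
    set Θ : H ⊗[k] (H ⊗[k] H) →ₗ[k] H ⊗[k] H :=
      LinearMap.mul' k (H ⊗[k] H) ∘ₗ TensorProduct.map (Coalgebra.comul) P' with hΘ
    have step0 : conv D P a
        = Θ (∑ i ∈ r.index, r.left i ⊗ₜ[k] Coalgebra.comul (R := k) (r.right i)) := by
      rw [conv_repr D P r, map_sum]
      refine Finset.sum_congr rfl fun i _ => ?_
      simp only [hΘ, hD, hP, LinearMap.comp_apply, TensorProduct.map_tmul,
        LinearMap.mul'_apply]
    have step1 : ∑ i ∈ r.index, r.left i ⊗ₜ[k] Coalgebra.comul (R := k) (r.right i)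
        = ∑ i ∈ r.index, ∑ p ∈ (ℛ k (r.left i)).index,
            (ℛ k (r.left i)).left p ⊗ₜ[k]
              ((ℛ k (r.left i)).right p ⊗ₜ[k] r.right i) := by
      calc
        ∑ i ∈ r.index, r.left i ⊗ₜ[k] Coalgebra.comul (R := k) (r.right i)
          = ∑ i ∈ r.index, ∑ q ∈ (ℛ k (r.right i)).index,
              r.left i ⊗ₜ[k]
                ((ℛ k (r.right i)).left q ⊗ₜ[k] (ℛ k (r.right i)).right q) := by
            refine Finset.sum_congr rfl fun i _ => ?_
            rw [← (ℛ k (r.right i)).eq, TensorProduct.tmul_sum]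
        _ = _ := (repr_coassoc Coalgebra.coassoc r (fun i => ℛ k (r.left i))
              (fun i => ℛ k (r.right i))).symm
    have step2 : ∀ i ∈ r.index,
        Θ (∑ p ∈ (ℛ k (r.left i)).index,
            (ℛ k (r.left i)).left p ⊗ₜ[k]
              ((ℛ k (r.left i)).right p ⊗ₜ[k] r.right i))
          = (r.left i * HopfAlgebra.antipode (R := k) (r.right i)) ⊗ₜ[k] (1 : H) := by
      intro i _
      set si : Coalgebra.Repr k (r.left i) (H × H) := ℛ k (r.left i) with hsi
      set Ξ : H ⊗[k] (H ⊗[k] H) →ₗ[k] H ⊗[k] H :=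
        TensorProduct.map
          (LinearMap.mulRight k (HopfAlgebra.antipode (R := k) (r.right i)))
          (LinearMap.mul' k H ∘ₗ (HopfAlgebra.antipode (R := k) (A := H)).lTensor H)
        with hΞ
      calc
        Θ (∑ p ∈ si.index, si.left p ⊗ₜ[k] (si.right p ⊗ₜ[k] r.right i))
            = ∑ p ∈ si.index, ∑ q ∈ (ℛ k (si.left p)).index,
                ((ℛ k (si.left p)).left q *
                    HopfAlgebra.antipode (R := k) (r.right i)) ⊗ₜ[k]
                  ((ℛ k (si.left p)).right q *
                    HopfAlgebra.antipode (R := k) (si.right p)) := by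
          rw [map_sum]
          refine Finset.sum_congr rfl fun p _ => ?_
          rw [hΘ, LinearMap.comp_apply, TensorProduct.map_tmul, LinearMap.mul'_apply,
            hP', LinearMap.comp_apply, LinearEquiv.coe_coe, TensorProduct.comm_tmul,
            TensorProduct.map_tmul, ← (ℛ k (si.left p)).eq, Finset.sum_mul]
          exact Finset.sum_congr rfl fun q _ =>
            Algebra.TensorProduct.tmul_mul_tmul _ _ _ _
        _ = Ξ (∑ p ∈ si.index, ∑ q ∈ (ℛ k (si.left p)).index,
                (ℛ k (si.left p)).left q ⊗ₜ[k]
                  ((ℛ k (si.left p)).right q ⊗ₜ[k] si.right p)) := by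
          rw [map_sum]
          refine Finset.sum_congr rfl fun p _ => ?_
          rw [map_sum]
          refine Finset.sum_congr rfl fun q _ => ?_
          rw [hΞ, TensorProduct.map_tmul, LinearMap.mulRight_apply, LinearMap.comp_apply,
            LinearMap.lTensor_tmul, LinearMap.mul'_apply]
        _ = Ξ (∑ p ∈ si.index, ∑ q ∈ (ℛ k (si.right p)).index,
                si.left p ⊗ₜ[k]
                  ((ℛ k (si.right p)).left q ⊗ₜ[k] (ℛ k (si.right p)).right q)) := by
          rw [repr_coassoc Coalgebra.coassoc si (fun p => ℛ k (si.left p))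
            (fun p => ℛ k (si.right p))]
        _ = ∑ p ∈ si.index,
              (si.left p * HopfAlgebra.antipode (R := k) (r.right i)) ⊗ₜ[k]
                (∑ q ∈ (ℛ k (si.right p)).index,
                  (ℛ k (si.right p)).left q *
                    HopfAlgebra.antipode (R := k) ((ℛ k (si.right p)).right q)) := by
          rw [map_sum]
          refine Finset.sum_congr rfl fun p _ => ?_
          rw [map_sum]
          have expand : ∀ q ∈ (ℛ k (si.right p)).index,
              Ξ (si.left p ⊗ₜ[k]
                  ((ℛ k (si.right p)).left q ⊗ₜ[k] (ℛ k (si.right p)).right q))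
                = (si.left p * HopfAlgebra.antipode (R := k) (r.right i)) ⊗ₜ[k]
                    ((ℛ k (si.right p)).left q *
                      HopfAlgebra.antipode (R := k) ((ℛ k (si.right p)).right q)) := by
            intro q _
            rw [hΞ, TensorProduct.map_tmul, LinearMap.mulRight_apply, LinearMap.comp_apply,
              LinearMap.lTensor_tmul, LinearMap.mul'_apply]
          rw [Finset.sum_congr rfl expand, ← TensorProduct.tmul_sum]
        _ = ∑ p ∈ si.index,
              (si.left p * HopfAlgebra.antipode (R := k) (r.right i)) ⊗ₜ[k]
                (algebraMap k H (Coalgebra.counit (R := k) (si.right p))) := by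
          refine Finset.sum_congr rfl fun p _ => ?_
          rw [HopfAlgebra.sum_mul_antipode_eq_algebraMap_counit (ℛ k (si.right p))]
        _ = ∑ p ∈ si.index, Coalgebra.counit (R := k) (si.right p) •
              ((si.left p * HopfAlgebra.antipode (R := k) (r.right i)) ⊗ₜ[k] (1 : H)) := by
          refine Finset.sum_congr rfl fun p _ => ?_
          rw [Algebra.algebraMap_eq_smul_one, TensorProduct.tmul_smul]
        _ = ((∑ p ∈ si.index, Coalgebra.counit (R := k) (si.right p) • si.left p) *
              HopfAlgebra.antipode (R := k) (r.right i)) ⊗ₜ[k] (1 : H) := by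
          simp only [Finset.sum_mul, TensorProduct.sum_tmul]
          refine Finset.sum_congr rfl fun p _ => ?_
          rw [TensorProduct.smul_tmul', smul_mul_assoc]
        _ = (r.left i * HopfAlgebra.antipode (R := k) (r.right i)) ⊗ₜ[k] (1 : H) := by
          rw [sum_counit_smul_right Coalgebra.lTensor_counit_comp_comul si]
    rw [step0, step1, map_sum, Finset.sum_congr rfl step2, ← TensorProduct.sum_tmul,
      HopfAlgebra.sum_mul_antipode_eq_algebraMap_counit r, cunit_apply,
      Algebra.TensorProduct.algebraMap_apply]
  have h3 : P = N := conv_unique Coalgebra.coassoc Coalgebra.rTensor_counit_comp_comul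
    Coalgebra.lTensor_counit_comp_comul h2 h1
  have h4 := congr($h3 x)
  simpa only [hP, hN, hP', hD, LinearMap.comp_apply, LinearEquiv.coe_coe] using h4.symm

end Hopf


end HopfAux

/-- A subalgebra `K` of a Hopf algebra `H` is a Hopf subalgebra if it is stable under
the comultiplication (`Δ(K) ⊆ K ⊗ K`) and under the antipode. -/
def IsHopfSubalgebra {k : Type u} [CommRing k] {H : Type v} [Ring H] [HopfAlgebra k H]
    (K : Subalgebra k H) : Prop :=
  (∀ x ∈ K, Coalgebra.comul (R := k) x ∈
      Submodule.span k {t : H ⊗[k] H | ∃ a ∈ K, ∃ b ∈ K, t = a ⊗ₜ[k] b}) ∧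
  (∀ x ∈ K, HopfAlgebra.antipode (R := k) x ∈ K)

/-- A submodule `C` of a Hopf algebra `H` is a subcoalgebra if `Δ(C) ⊆ C ⊗ C`. -/
def IsSubcoalgebra {k : Type u} [CommRing k] {H : Type v} [Ring H] [HopfAlgebra k H]
    (C : Submodule k H) : Prop :=
  ∀ x ∈ C, Coalgebra.comul (R := k) x ∈
    Submodule.span k {t : H ⊗[k] H | ∃ a ∈ C, ∃ b ∈ C, t = a ⊗ₜ[k] b}

namespace HopfAux

section Assembly

variable {k : Type u} [CommRing k] {H : Type v} [Ring H] [HopfAlgebra k H]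

lemma isSubcoalgebra_bot : IsSubcoalgebra (⊥ : Submodule k H) := by
  intro x hx
  rw [Submodule.mem_bot] at hx
  subst hx
  rw [map_zero]
  exact zero_mem _

lemma isSubcoalgebra_sup {C D : Submodule k H} (hC : IsSubcoalgebra C)
    (hD : IsSubcoalgebra D) : IsSubcoalgebra (C ⊔ D) := by
  intro x hx
  obtain ⟨c, hc, d, hd, rfl⟩ := Submodule.mem_sup.mp hx
  rw [map_add]
  refine add_mem (Submodule.span_mono ?_ (hC c hc)) (Submodule.span_mono ?_ (hD d hd))
  · rintro t ⟨a, ha, b, hb, rfl⟩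
    exact ⟨a, Submodule.mem_sup_left ha, b, Submodule.mem_sup_left hb, rfl⟩
  · rintro t ⟨a, ha, b, hb, rfl⟩
    exact ⟨a, Submodule.mem_sup_right ha, b, Submodule.mem_sup_right hb, rfl⟩

lemma isSubcoalgebra_finsetSup {ι : Type*} (s : Finset ι) (f : ι → Submodule k H)
    (h : ∀ i ∈ s, IsSubcoalgebra (f i)) : IsSubcoalgebra (s.sup f) := by
  classical
  induction s using Finset.induction_on with
  | empty => simpa using isSubcoalgebra_bot
  | @insert a s ha ih =>
      rw [Finset.sup_insert]
      exact isSubcoalgebra_sup (h a (Finset.mem_insert_self a s))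
        (ih fun i hi => h i (Finset.mem_insert_of_mem hi))

lemma isSubcoalgebra_map_antipode {C : Submodule k H} (h : IsSubcoalgebra C) :
    IsSubcoalgebra (C.map (HopfAlgebra.antipode (R := k) (A := H))) := by
  rintro x hx
  obtain ⟨c, hc, rfl⟩ := Submodule.mem_map.mp hx
  rw [comul_antipode]
  set L : H ⊗[k] H →ₗ[k] H ⊗[k] H :=
    TensorProduct.map (HopfAlgebra.antipode (R := k)) (HopfAlgebra.antipode (R := k)) ∘ₗ
      (TensorProduct.comm k H H).toLinearMap with hL
  have h2 : L (Coalgebra.comul (R := k) c) ∈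
      Submodule.span k
        (L '' {t : H ⊗[k] H | ∃ a ∈ C, ∃ b ∈ C, t = a ⊗ₜ[k] b}) :=
    Submodule.apply_mem_span_image_of_mem_span L (h c hc)
  have h3 : (L '' {t : H ⊗[k] H | ∃ a ∈ C, ∃ b ∈ C, t = a ⊗ₜ[k] b}) ⊆
      {t : H ⊗[k] H | ∃ a ∈ C.map (HopfAlgebra.antipode (R := k) (A := H)),
        ∃ b ∈ C.map (HopfAlgebra.antipode (R := k) (A := H)), t = a ⊗ₜ[k] b} := by
    rintro t ⟨w, ⟨a, ha, b, hb, rfl⟩, rfl⟩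
    refine ⟨HopfAlgebra.antipode (R := k) b, Submodule.mem_map_of_mem hb,
      HopfAlgebra.antipode (R := k) a, Submodule.mem_map_of_mem ha, ?_⟩
    simp [hL]
  have h4 := Submodule.span_mono h3 h2
  simpa [hL] using h4

lemma isSubcoalgebra_map_pow (n : ℕ) {C : Submodule k H} (h : IsSubcoalgebra C) :
    IsSubcoalgebra (C.map ((HopfAlgebra.antipode (R := k) (A := H)) ^ n)) := by
  induction n with
  | zero => simpa [pow_zero, Module.End.one_eq_id, Submodule.map_id] using h
  | succ n ih =>
      rw [pow_succ', Module.End.mul_eq_comp, Submodule.map_comp]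
      exact isSubcoalgebra_map_antipode ih

end Assembly

end HopfAux

/-- If the antipode of a Hopf algebra `H` has finite order and every element of `H` lies
in a finite-dimensional subcoalgebra, then `H` is locally affine: every finite subset is
contained in an affine Hopf subalgebra. -/
theorem stmt18 {k : Type u} [Field k] {H : Type v} [Ring H] [HopfAlgebra k H]
    (m : ℕ) (hm : 1 ≤ m)
    (hS : (HopfAlgebra.antipode (R := k) (A := H)) ^ m = LinearMap.id)
    (hfd : ∀ h : H, ∃ C : Submodule k H, h ∈ C ∧ FiniteDimensional k ↥C ∧ IsSubcoalgebra C)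
    (s : Finset H) :
    ∃ K : Subalgebra k H, IsHopfSubalgebra K ∧ K.FG ∧ ↑s ⊆ (K : Set H) := by
  classical
  choose C hmem hfin hsub using hfd
  haveI : ∀ h : H, FiniteDimensional k (C h) := hfin
  set S : H →ₗ[k] H := HopfAlgebra.antipode (R := k) (A := H) with hSdef
  set W : Submodule k H := s.sup C with hW
  have hWsub : IsSubcoalgebra W := HopfAux.isSubcoalgebra_finsetSup s C fun i _ => hsub i
  set X : Submodule k H := (Finset.range m).sup (fun i => W.map (S ^ i)) with hX
  haveI hXfin : FiniteDimensional k X := by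
    haveI : ∀ i : ℕ, FiniteDimensional k (W.map (S ^ i)) := fun i => inferInstance
    exact Submodule.finiteDimensional_finset_sup _ _
  have hXsub : IsSubcoalgebra X :=
    HopfAux.isSubcoalgebra_finsetSup _ _ fun i _ => HopfAux.isSubcoalgebra_map_pow i hWsub
  have hWX : W ≤ X := by
    have h0 : W.map (S ^ 0) = W := by
      rw [pow_zero]
      exact Submodule.map_id W
    have h1 : W.map (S ^ 0) ≤ (Finset.range m).sup (fun i => W.map (S ^ i)) :=
      Finset.le_sup (f := fun i => W.map (S ^ i)) (Finset.mem_range.mpr hm)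
    rw [← hX] at h1
    exact h0 ▸ h1
  have hSX : ∀ x ∈ X, S x ∈ X := by
    intro x hx
    have hcomm : Submodule.map S X
        = (Finset.range m).sup fun i => Submodule.map S (W.map (S ^ i)) := by
      rw [hX]
      exact Finset.comp_sup_eq_sup_comp (Submodule.map S)
        (fun p q => Submodule.map_sup p q S) (Submodule.map_bot S)
    have hmap : Submodule.map S X ≤ X := by
      rw [hcomm]
      refine Finset.sup_le fun i hi => ?_
      rw [← Submodule.map_comp, ← Module.End.mul_eq_comp, ← pow_succ']
      rcases eq_or_lt_of_le (Nat.succ_le_of_lt (Finset.mem_range.mp hi)) with he | hlt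
      · rw [show i + 1 = m from he, hS, Submodule.map_id]
        exact hWX
      · have h2 : W.map (S ^ (i + 1)) ≤ (Finset.range m).sup (fun j => W.map (S ^ j)) :=
          Finset.le_sup (f := fun j => W.map (S ^ j)) (Finset.mem_range.mpr hlt)
        rw [← hX] at h2
        exact h2
    exact hmap (Submodule.mem_map_of_mem hx)
  refine ⟨Algebra.adjoin k (X : Set H), ⟨?_, ?_⟩, ?_, ?_⟩
  · -- comul stability
    set Tset : Set (H ⊗[k] H) :=
      {t | ∃ a ∈ Algebra.adjoin k (X : Set H), ∃ b ∈ Algebra.adjoin k (X : Set H),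
        t = a ⊗ₜ[k] b} with hTset
    have h1T : (1 : H ⊗[k] H) ∈ Submodule.span k Tset :=
      Submodule.subset_span ⟨1, one_mem _, 1, one_mem _, Algebra.TensorProduct.one_def⟩
    have hmulT : ∀ x y : H ⊗[k] H,
        x ∈ Submodule.span k Tset → y ∈ Submodule.span k Tset →
          x * y ∈ Submodule.span k Tset := by
      intro u v hu hv
      have hle : Submodule.span k Tset * Submodule.span k Tset ≤ Submodule.span k Tset := by
        rw [Submodule.span_mul_span]
        refine Submodule.span_le.mpr ?_
        rintro t ht
        obtain ⟨t1, ht1, t2, ht2, rfl⟩ := Set.mem_mul.mp ht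
        obtain ⟨a, ha, b, hb, rfl⟩ := ht1
        obtain ⟨a', ha', b', hb', rfl⟩ := ht2
        exact Submodule.subset_span
          ⟨a * a', mul_mem ha ha', b * b', mul_mem hb hb',
            Algebra.TensorProduct.tmul_mul_tmul ..⟩
      exact hle (Submodule.mul_mem_mul hu hv)
    set T : Subalgebra k (H ⊗[k] H) := (Submodule.span k Tset).toSubalgebra h1T hmulT
      with hT
    have hKT : Algebra.adjoin k (X : Set H) ≤ T.comap (Bialgebra.comulAlgHom k H) := by
      rw [Algebra.adjoin_le_iff]
      intro w hw
      have h5 := hXsub w hw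
      simp only [SetLike.mem_coe, Subalgebra.mem_comap, hT, Submodule.mem_toSubalgebra,
        Bialgebra.comulAlgHom_apply]
      refine Submodule.span_mono ?_ h5
      rintro t ⟨a, ha, b, hb, rfl⟩
      exact ⟨a, Algebra.subset_adjoin ha, b, Algebra.subset_adjoin hb, rfl⟩
    intro x hx
    have h6 := hKT hx
    rw [Subalgebra.mem_comap] at h6
    rw [hT, Submodule.mem_toSubalgebra] at h6
    simpa [hTset, Bialgebra.comulAlgHom_apply] using h6
  · -- antipode stability
    let K' : Subalgebra k H :=
      { carrier := {x | x ∈ Algebra.adjoin k (X : Set H) ∧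
          S x ∈ Algebra.adjoin k (X : Set H)}
        mul_mem' := fun {a b} ha hb => ⟨mul_mem ha.1 hb.1, by
          rw [hSdef, HopfAux.antipode_mul]
          exact mul_mem hb.2 ha.2⟩
        one_mem' := ⟨one_mem _, by
          rw [hSdef, HopfAux.antipode_one]
          exact one_mem _⟩
        add_mem' := fun {a b} ha hb => ⟨add_mem ha.1 hb.1, by
          rw [map_add]
          exact add_mem ha.2 hb.2⟩
        zero_mem' := ⟨zero_mem _, by
          rw [map_zero]
          exact zero_mem _⟩
        algebraMap_mem' := fun c => ⟨Subalgebra.algebraMap_mem _ c, by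
          rw [hSdef, HopfAux.antipode_algebraMap]
          exact Subalgebra.algebraMap_mem _ c⟩ }
    have hXK' : (X : Set H) ⊆ K' := fun x hx =>
      ⟨Algebra.subset_adjoin hx, Algebra.subset_adjoin (hSX x hx)⟩
    intro x hx
    exact ((Algebra.adjoin_le_iff.mpr hXK') hx).2
  · -- finitely generated
    obtain ⟨t, ht⟩ := (Module.Finite.iff_fg (N := X)).mp hXfin
    rw [← ht, Algebra.adjoin_span]
    exact Subalgebra.fg_adjoin_finset t
  · -- contains s
    intro x hx
    exact Algebra.subset_adjoin (hWX ((Finset.le_sup (f := C) hx) (hmem x)))
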